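/- Let H_S(q,p,t) = p²/4 - tq² - q⁴ and suppose (q,p) solve p' = -∂H_S/∂q, q' = ∂H_S/∂p on ℝ. Define S(t) = (1/3)(2t·H_S(q(t),p(t),t) - p(t)q(t)) - ∫ₜ^∞ (p(s)q'(s) - H_S(q(s),p(s),s)) ds (assuming the integral converges). Then d/dt S(t) = H_S(q(t),p(t),t). -/

import Mathlib

/-- The soft-edge Hamiltonian `H_S(q,p,t) = p²/4 - t q² - q⁴`. -/
noncomputable def HS (q p t : ℝ) : ℝ := p ^ 2 / 4 - t * q ^ 2 - q ^ 4

/-- with `S(t) = (1/3)(2t·H_S(q,p,t) - pq) - ∫ₜ^∞ (p q' - H_S) ds` (the improper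
integral `J` being assumed to exist and be differentiable with derivative
`-(p(t)q'(t) - H_S(q(t),p(t),t))`), where `(q,p)` solve the Hamiltonian system for `H_S`
on `ℝ`, one has `dS/dt = H_S(q(t),p(t),t)`. -/
theorem extended_JMU_soft_edge_derivative
    (q p J : ℝ → ℝ)
    (hq : ∀ t : ℝ, HasDerivAt q (p t / 2) t)
    (hp : ∀ t : ℝ, HasDerivAt p (2 * t * q t + 4 * (q t) ^ 3) t)
    (hJ : ∀ t : ℝ, HasDerivAt J (-(p t * deriv q t - HS (q t) (p t) t)) t)
    (t : ℝ) :
    HasDerivAt (fun τ : ℝ => (1 / 3) * (2 * τ * HS (q τ) (p τ) τ - p τ * q τ) - J τ)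
      (HS (q t) (p t) t) t := by
  have hdq : deriv q t = p t / 2 := (hq t).deriv
  have hJ' : HasDerivAt J (-(p t * (p t / 2) - HS (q t) (p t) t)) t := by
    have := hJ t; rwa [hdq] at this
  have hid : HasDerivAt (fun τ : ℝ => τ) 1 t := hasDerivAt_id t
  have hH : HasDerivAt (fun τ : ℝ => HS (q τ) (p τ) τ) (-(q t) ^ 2) t := by
    simp only [HS]
    have h := ((((hp t).pow 2).div_const 4).sub
      (hid.mul ((hq t).pow 2))).sub ((hq t).pow 4)
    refine h.congr_deriv ?_
    simp only [Pi.pow_apply]; norm_num; ring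
  have h1 := ((((hid.const_mul 2).mul hH).sub ((hp t).mul (hq t))).const_mul
    ((1:ℝ)/3)).sub hJ'
  refine h1.congr_deriv ?_
  simp only [HS]
  ring
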